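/- 3C-criterion: Let 𝒟 : 𝒩 = 𝒩₁ ∪ ⋯ ∪ 𝒩ₖ be a decomposition with d = |𝒞_𝒟| common complexes, and let hᵢ = |𝒞ᵢ ∩ 𝒞_𝒟|. Then 𝒟 is incidence independent if and only if Σᵢ ℓᵢ − ℓ = Σᵢ hᵢ − d. -/

import Mathlib

open Finset

/-- The set of complexes of subnetwork `i` (complexes occurring in its reactions). -/
def cplxSet {C R : Type} (src tgt : R → C) {k : ℕ} (part : R → Fin k) (i : Fin k) : Set C :=
  {c | ∃ r, part r = i ∧ (src r = c ∨ tgt r = c)}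

/-- The set of common complexes of the decomposition: complexes occurring in at least
two distinct subnetworks. -/
def commonSet {C R : Type} (src tgt : R → C) {k : ℕ} (part : R → Fin k) : Set C :=
  {c | ∃ i j : Fin k, i ≠ j ∧ c ∈ cplxSet src tgt part i ∧ c ∈ cplxSet src tgt part j}

/-- Underlying (undirected) graph of the reaction network. -/
def parentGraph {C R : Type} (src tgt : R → C) : SimpleGraph C :=
  SimpleGraph.fromRel (fun a b => ∃ r, src r = a ∧ tgt r = b)

/-- Underlying graph of subnetwork `i`. -/
def subGraph {C R : Type} (src tgt : R → C) {k : ℕ} (part : R → Fin k) (i : Fin k) :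
    SimpleGraph C :=
  SimpleGraph.fromRel (fun a b => ∃ r, part r = i ∧ src r = a ∧ tgt r = b)

/-- The incidence map `I_a : ℝ^ℛ → ℝ^𝒞`. -/
noncomputable def incid {C R : Type} [Fintype R] [DecidableEq C] (src tgt : R → C) :
    (R → ℝ) →ₗ[ℝ] (C → ℝ) :=
  ∑ r : R, (LinearMap.toSpanSingleton ℝ (C → ℝ)
      (Pi.single (tgt r) 1 - Pi.single (src r) 1)).comp (LinearMap.proj r)

/-- The incidence map of subnetwork `i`. -/
noncomputable def incidSub {C R : Type} [Fintype R] [DecidableEq C] (src tgt : R → C)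
    {k : ℕ} (part : R → Fin k) (i : Fin k) : (R → ℝ) →ₗ[ℝ] (C → ℝ) :=
  ∑ r ∈ Finset.univ.filter (fun r => part r = i),
    (LinearMap.toSpanSingleton ℝ (C → ℝ)
      (Pi.single (tgt r) 1 - Pi.single (src r) 1)).comp (LinearMap.proj r)

/-- Incidence independence: the image of the incidence map of the parent network is
the (internal) direct sum of the images of the subnetworks' incidence maps. -/
def IncIndep {C R : Type} [Fintype R] [DecidableEq C] (src tgt : R → C)
    {k : ℕ} (part : R → Fin k) : Prop :=
  LinearMap.range (incid src tgt) = (⨆ i : Fin k, LinearMap.range (incidSub src tgt part i)) ∧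
  ∀ f : Fin k → (C → ℝ), (∀ i, f i ∈ LinearMap.range (incidSub src tgt part i)) →
    (∑ i, f i) = 0 → ∀ i, f i = 0

/-- Number of linkage classes of subnetwork `i`: connected components of its underlying
graph that meet its complex set. -/
noncomputable def numLCsub {C R : Type} (src tgt : R → C) {k : ℕ} (part : R → Fin k)
    (i : Fin k) : ℕ :=
  Nat.card {comp : (subGraph src tgt part i).ConnectedComponent //
    ∃ c ∈ cplxSet src tgt part i, (subGraph src tgt part i).connectedComponentMk c = comp}


set_option linter.unusedSectionVars false
set_option linter.unusedVariables false
set_option maxHeartbeats 1000000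

section AuxCRN
open Module Submodule
variable {C R : Type} [Fintype C] [Fintype R] [DecidableEq C]


/-- edge vector -/
noncomputable def evec (src tgt : R → C) (r : R) : C → ℝ :=
  Pi.single (tgt r) 1 - Pi.single (src r) 1

lemma sum_apply_evec (src tgt : R → C) (s : Finset R) (x : R → ℝ) :
    (∑ r ∈ s, (LinearMap.toSpanSingleton ℝ (C → ℝ)
      (Pi.single (tgt r) 1 - Pi.single (src r) 1)).comp (LinearMap.proj r)) x
      = ∑ r ∈ s, x r • evec src tgt r := by
  simp [LinearMap.sum_apply, evec, LinearMap.toSpanSingleton_apply]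

lemma range_sum_eq_span (src tgt : R → C) (s : Finset R) :
    LinearMap.range (∑ r ∈ s, (LinearMap.toSpanSingleton ℝ (C → ℝ)
      (Pi.single (tgt r) 1 - Pi.single (src r) 1)).comp (LinearMap.proj r))
      = span ℝ (evec src tgt '' s) := by
  apply le_antisymm
  · rintro _ ⟨x, rfl⟩
    rw [sum_apply_evec]
    exact Submodule.sum_mem _ fun r hr =>
      Submodule.smul_mem _ _ (subset_span ⟨r, by simpa using hr, rfl⟩)
  · classical
    rw [span_le]
    rintro _ ⟨r, hr, rfl⟩
    refine ⟨Pi.single r 1, ?_⟩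
    rw [sum_apply_evec]
    rw [Finset.sum_eq_single r]
    · simp
    · intro b _ hb; simp [Pi.single_apply, hb]
    · intro h; exact absurd (by simpa using hr) h

lemma finrank_span_evec (src tgt : R → C) (s : Finset R) :
    finrank ℝ (span ℝ (evec src tgt '' s) : Submodule ℝ (C → ℝ))
      + Nat.card (SimpleGraph.fromRel
          (fun x y => ∃ r ∈ s, src r = x ∧ tgt r = y)).ConnectedComponent
      = Fintype.card C := by
  classical
  set G := SimpleGraph.fromRel (fun x y => ∃ r ∈ s, src r = x ∧ tgt r = y) with hG
  set Q := G.ConnectedComponent with hQ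
  haveI : Fintype Q := Fintype.ofFinite Q
  set W : Submodule ℝ (C → ℝ) := span ℝ (evec src tgt '' s) with hW
  -- single differences along reachability lie in W
  have key : ∀ a b : C, G.Reachable a b → Pi.single a (1:ℝ) - Pi.single b 1 ∈ W := by
    intro a b h
    obtain ⟨w⟩ := h
    induction w with
    | nil => simp
    | @cons x y z hadj p ih =>
      have h1 : Pi.single x (1:ℝ) - Pi.single y 1 ∈ W := by
        rw [hG, SimpleGraph.fromRel_adj] at hadj
        obtain ⟨hne, ⟨r, hrs, h1, h2⟩ | ⟨r, hrs, h1, h2⟩⟩ := hadj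
        · have : evec src tgt r ∈ W := subset_span ⟨r, by simpa using hrs, rfl⟩
          have := W.neg_mem this
          simpa [evec, h1, h2, neg_sub] using this
        · exact h1 ▸ h2 ▸ subset_span ⟨r, by simpa using hrs, rfl⟩
      have := W.add_mem h1 ih
      simpa using this
  -- the component-sum map
  set Φ : (C → ℝ) →ₗ[ℝ] (Q → ℝ) :=
    ∑ c : C, (LinearMap.toSpanSingleton ℝ (Q → ℝ)
      (Pi.single (G.connectedComponentMk c) 1)).comp (LinearMap.proj c) with hΦ
  have hsingle : ∀ (c : C) (x : ℝ),
      Φ (Pi.single c x) = Pi.single (G.connectedComponentMk c) x := by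
    intro c x
    rw [hΦ]
    rw [LinearMap.sum_apply]
    rw [Finset.sum_eq_single c]
    · simp only [LinearMap.comp_apply, LinearMap.proj_apply, LinearMap.toSpanSingleton_apply,
        Pi.single_eq_same, ← Pi.single_smul, smul_eq_mul, mul_one]
    · intro b _ hb
      simp [LinearMap.toSpanSingleton_apply, Pi.single_apply, hb]
    · simp
  have hΦapp : ∀ (f : C → ℝ) (K : Q),
      Φ f K = ∑ c ∈ Finset.univ.filter (fun c => G.connectedComponentMk c = K), f c := by
    intro f K
    rw [hΦ, LinearMap.sum_apply]
    simp only [LinearMap.comp_apply, LinearMap.proj_apply, LinearMap.toSpanSingleton_apply,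
      Finset.sum_apply, Pi.smul_apply, Pi.single_apply, smul_eq_mul, mul_ite, mul_one, mul_zero]
    rw [Finset.sum_filter]
    refine Finset.sum_congr rfl fun c _ => ?_
    by_cases h : G.connectedComponentMk c = K
    · simp [h]
    · simp [h, Ne.symm h]
  choose rep hrep using fun K : Q => Quot.exists_rep K
  have hsurj : LinearMap.range Φ = ⊤ := by
    rw [eq_top_iff]
    rintro g -
    refine ⟨∑ K : Q, Pi.single (rep K) (g K), ?_⟩
    rw [map_sum]
    simp_rw [hsingle]
    have hmk : ∀ K : Q, G.connectedComponentMk (rep K) = K := hrep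
    simp_rw [hmk]
    exact Finset.univ_sum_single g
  have hker : LinearMap.ker Φ = W := by
    apply le_antisymm
    · intro f hf
      rw [LinearMap.mem_ker] at hf
      have hmem : ∀ c : C,
          Pi.single c (1:ℝ) - Pi.single (rep (G.connectedComponentMk c)) 1 ∈ W := by
        intro c
        exact key _ _ (SimpleGraph.ConnectedComponent.exact (hrep _)).symm
      have hT : (∑ c : C, f c • (Pi.single (rep (G.connectedComponentMk c)) (1:ℝ) : C → ℝ)) = 0 := by
        rw [← Finset.sum_fiberwise Finset.univ (fun c => G.connectedComponentMk c)]
        refine Finset.sum_eq_zero fun K _ => ?_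
        have hcg : ∀ c ∈ Finset.univ.filter (fun c => G.connectedComponentMk c = K),
            f c • (Pi.single (rep (G.connectedComponentMk c)) (1:ℝ) : C → ℝ)
              = f c • (Pi.single (rep K) (1:ℝ) : C → ℝ) := by
          intro c hc
          rw [(Finset.mem_filter.mp hc).2]
        rw [Finset.sum_congr rfl hcg, ← Finset.sum_smul, ← hΦapp f K, hf]
        simp
      have hf' : f = ∑ c : C, f c •
          (Pi.single c 1 - Pi.single (rep (G.connectedComponentMk c)) 1) := by
        simp_rw [smul_sub]
        rw [Finset.sum_sub_distrib, hT, sub_zero]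
        simp_rw [← Pi.single_smul, smul_eq_mul, mul_one]
        exact (Finset.univ_sum_single f).symm
      rw [hf']
      exact Submodule.sum_mem _ fun c _ => Submodule.smul_mem _ _ (hmem c)
    · rw [hW, span_le]
      rintro _ ⟨r, hr, rfl⟩
      simp only [SetLike.mem_coe, LinearMap.mem_ker]
      have hev : evec src tgt r = Pi.single (tgt r) 1 - Pi.single (src r) 1 := rfl
      rw [hev, map_sub, hsingle, hsingle]
      have hcomp : G.connectedComponentMk (src r) = G.connectedComponentMk (tgt r) := by
        by_cases h : src r = tgt r
        · rw [h]
        · refine SimpleGraph.ConnectedComponent.sound (SimpleGraph.Adj.reachable ?_)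
          rw [hG, SimpleGraph.fromRel_adj]
          exact ⟨h, Or.inl ⟨r, by simpa using hr, rfl, rfl⟩⟩
      rw [hcomp]
      simp
  have hrn := LinearMap.finrank_range_add_finrank_ker Φ
  rw [hsurj, hker, finrank_top, Module.finrank_fintype_fun_eq_card,
    Module.finrank_fintype_fun_eq_card] at hrn
  rw [Nat.card_eq_fintype_card]
  omega

lemma indep_iff_finrank {k : ℕ} (V : Fin k → Submodule ℝ (C → ℝ)) :
    (∀ f : Fin k → (C → ℝ), (∀ i, f i ∈ V i) → (∑ i, f i) = 0 → ∀ i, f i = 0)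
      ↔ ∑ i, finrank ℝ (V i) = finrank ℝ ↥(⨆ i, V i) := by
  classical
  set φ : (∀ i : Fin k, V i) →ₗ[ℝ] (C → ℝ) :=
    ∑ i, (V i).subtype.comp (LinearMap.proj i) with hφ
  have happ : ∀ x, φ x = ∑ i, ((x i : C → ℝ)) := by
    intro x; simp [hφ, LinearMap.sum_apply]
  have hrange : LinearMap.range φ = ⨆ i, V i := by
    apply le_antisymm
    · rintro _ ⟨x, rfl⟩
      rw [happ]
      exact Submodule.sum_mem _ fun i _ => (le_iSup V i) (x i).2
    · refine iSup_le fun j w hw => ?_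
      refine ⟨Pi.single j ⟨w, hw⟩, ?_⟩
      rw [happ, Finset.sum_eq_single j]
      · simp
      · intro b _ hb; rw [Pi.single_eq_of_ne hb]; rfl
      · simp
  have hpi : finrank ℝ (∀ i : Fin k, V i) = ∑ i, finrank ℝ (V i) :=
    Module.finrank_pi_fintype ℝ
  constructor
  · intro hind
    have hinj : Function.Injective φ := by
      rw [← LinearMap.ker_eq_bot, Submodule.eq_bot_iff]
      intro x hx
      rw [LinearMap.mem_ker, happ] at hx
      have h0 := hind (fun i => (x i : C → ℝ)) (fun i => (x i).2) hx
      funext i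
      exact Subtype.ext (h0 i)
    calc ∑ i, finrank ℝ (V i) = finrank ℝ (∀ i : Fin k, V i) := hpi.symm
      _ = finrank ℝ (LinearMap.range φ) := (LinearMap.finrank_range_of_inj hinj).symm
      _ = finrank ℝ ↥(⨆ i, V i) := by rw [hrange]
  · intro heq f hf hsum i
    have h1 := LinearMap.finrank_range_add_finrank_ker φ
    rw [hrange] at h1
    have hker0 : finrank ℝ (LinearMap.ker φ) = 0 := by omega
    have hkerbot : LinearMap.ker φ = ⊥ := Submodule.finrank_eq_zero.mp hker0
    set x : ∀ i : Fin k, V i := fun i => ⟨f i, hf i⟩ with hx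
    have hmem : x ∈ LinearMap.ker φ := by
      rw [LinearMap.mem_ker, happ]
      exact hsum
    rw [hkerbot, Submodule.mem_bot] at hmem
    exact congrArg Subtype.val (congrFun hmem i)

variable (src tgt : R → C) {k : ℕ} (part : R → Fin k)

lemma range_incid_eq :
    LinearMap.range (incid src tgt) = span ℝ (evec src tgt '' (Finset.univ : Finset R)) :=
  range_sum_eq_span src tgt Finset.univ

lemma range_incidSub_eq (i : Fin k) :
    LinearMap.range (incidSub src tgt part i)
      = span ℝ (evec src tgt '' (Finset.univ.filter (fun r => part r = i))) :=
  range_sum_eq_span src tgt _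

lemma parentGraph_eq :
    parentGraph src tgt = SimpleGraph.fromRel
      (fun x y => ∃ r ∈ (Finset.univ : Finset R), src r = x ∧ tgt r = y) := by
  unfold parentGraph
  congr 1
  funext x y
  simp

lemma subGraph_eq (i : Fin k) :
    subGraph src tgt part i = SimpleGraph.fromRel
      (fun x y => ∃ r ∈ Finset.univ.filter (fun r => part r = i), src r = x ∧ tgt r = y) := by
  classical
  unfold subGraph
  congr 1
  funext x y
  simp [Finset.mem_filter, and_assoc]

lemma rank_incid :
    finrank ℝ (LinearMap.range (incid src tgt))
      + Nat.card (parentGraph src tgt).ConnectedComponent = Fintype.card C := by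
  rw [range_incid_eq, parentGraph_eq]
  exact finrank_span_evec src tgt Finset.univ

lemma rank_incidSub (i : Fin k) :
    finrank ℝ (LinearMap.range (incidSub src tgt part i))
      + Nat.card (subGraph src tgt part i).ConnectedComponent = Fintype.card C := by
  classical
  rw [range_incidSub_eq, subGraph_eq]
  exact finrank_span_evec src tgt _

lemma range_incid_eq_iSup :
    LinearMap.range (incid src tgt) = ⨆ i, LinearMap.range (incidSub src tgt part i) := by
  classical
  rw [range_incid_eq]
  simp_rw [range_incidSub_eq]
  rw [← Submodule.span_iUnion]
  congr 1
  ext v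
  simp only [Set.mem_iUnion, Set.mem_image, Finset.coe_filter, Finset.coe_univ, Set.mem_univ,
    Set.mem_setOf_eq, true_and]
  constructor
  · rintro ⟨r, -, rfl⟩
    exact ⟨part r, r, ⟨Finset.mem_univ r, rfl⟩, rfl⟩
  · rintro ⟨i, hi⟩
    obtain ⟨r, hr, hv⟩ := hi
    exact ⟨r, hv⟩

lemma comps_sub (i : Fin k) :
    Nat.card (subGraph src tgt part i).ConnectedComponent
        + Nat.card ↥(cplxSet src tgt part i)
      = numLCsub src tgt part i + Fintype.card C := by
  classical
  set G := subGraph src tgt part i with hGdef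
  set S := cplxSet src tgt part i with hSdef
  have hiso' : ∀ c, c ∉ S → ∀ x, ¬ G.Adj c x := by
    intro c hc x hadj
    rw [hGdef, subGraph, SimpleGraph.fromRel_adj] at hadj
    obtain ⟨-, ⟨r, hri, h1, h2⟩ | ⟨r, hri, h1, h2⟩⟩ := hadj
    · exact hc ⟨r, hri, Or.inl h1⟩
    · exact hc ⟨r, hri, Or.inr h2⟩
  have hreach : ∀ c, c ∉ S → ∀ x, G.Reachable x c → x = c := by
    intro c hc x h
    obtain ⟨w⟩ := h.symm
    cases w with
    | nil => rfl
    | cons hadj p => exact absurd hadj (hiso' c hc _)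
  haveI : Fintype G.ConnectedComponent := Fintype.ofFinite _
  have hsplitQ : Nat.card G.ConnectedComponent
      = numLCsub src tgt part i + Nat.card {q : G.ConnectedComponent //
          ¬ ∃ c ∈ S, G.connectedComponentMk c = q} := by
    have h1 : numLCsub src tgt part i = Nat.card {q : G.ConnectedComponent //
        ∃ c ∈ S, G.connectedComponentMk c = q} := rfl
    rw [h1]
    simp only [Nat.card_eq_fintype_card]
    rw [Fintype.card_subtype_compl]
    have := Fintype.card_subtype_le (fun q : G.ConnectedComponent =>
      ∃ c ∈ S, G.connectedComponentMk c = q)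
    omega
  have hbij : Nat.card {q : G.ConnectedComponent // ¬ ∃ c ∈ S, G.connectedComponentMk c = q}
      = Nat.card {c : C // c ∉ S} := by
    have hfprop : ∀ c : {c : C // c ∉ S},
        ¬ ∃ c' ∈ S, G.connectedComponentMk c' = G.connectedComponentMk c.1 := by
      rintro c ⟨c', hc', hmk⟩
      exact c.2 ((hreach _ c.2 c' (SimpleGraph.ConnectedComponent.exact hmk)) ▸ hc')
    refine (Nat.card_eq_of_bijective
      (fun c => ⟨G.connectedComponentMk c.1, hfprop c⟩) ⟨?_, ?_⟩).symm
    · rintro ⟨c, hc⟩ ⟨c', hc'⟩ hcc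
      have hcc' : G.connectedComponentMk c = G.connectedComponentMk c' :=
        congrArg Subtype.val hcc
      exact Subtype.ext (hreach _ hc' c (SimpleGraph.ConnectedComponent.exact hcc'))
    · rintro ⟨K, hK⟩
      obtain ⟨c, hc⟩ := Quot.exists_rep K
      have hcS : c ∉ S := fun h => hK ⟨c, h, hc⟩
      exact ⟨⟨c, hcS⟩, Subtype.ext (show G.connectedComponentMk c = K from hc)⟩
  have hcompl : Nat.card {c : C // c ∉ S} + Nat.card ↥S = Fintype.card C := by
    have h1 : Nat.card {c : C // c ∉ S} = Nat.card ↥(Sᶜ) := rfl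
    have h2 := Set.ncard_add_ncard_compl S
    rw [h1, ← Nat.card_eq_fintype_card]
    simp only [Nat.card_coe_set_eq]
    omega
  omega

lemma counting (hiso : ∀ c : C, ∃ r, src r = c ∨ tgt r = c) :
    Nat.card ↥(commonSet src tgt part)
        + ∑ i, Nat.card ↥(cplxSet src tgt part i)
      = Fintype.card C
        + ∑ i, Nat.card ↥(cplxSet src tgt part i ∩ commonSet src tgt part) := by
  classical
  set T := commonSet src tgt part with hT
  set S : Fin k → Set C := cplxSet src tgt part with hS
  simp only [Nat.card_coe_set_eq]
  have hsplit : ∀ i, (S i ∩ T).ncard + (S i \ T).ncard = (S i).ncard := fun i =>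
    Set.ncard_inter_add_ncard_diff_eq_ncard (S i) T
  have hcompl : T.ncard + Tᶜ.ncard = Fintype.card C := by
    rw [Set.ncard_add_ncard_compl, Nat.card_eq_fintype_card]
  have hsum : ∑ i, (S i \ T).ncard = Tᶜ.ncard := by
    have hmem : ∀ c : C, c ∉ T → ∃ i, c ∈ S i := by
      intro c _
      obtain ⟨r, hr⟩ := hiso c
      exact ⟨part r, r, rfl, hr⟩
    have hdisj : ∀ i j : Fin k, i ≠ j → Disjoint (S i \ T) (S j \ T) := by
      intro i j hij
      rw [Set.disjoint_left]
      rintro c ⟨hci, hcT⟩ ⟨hcj, -⟩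
      exact hcT ⟨i, j, hij, hci, hcj⟩
    have hcover : (⋃ i, (S i \ T)) = Tᶜ := by
      ext c
      simp only [Set.mem_iUnion, Set.mem_diff, Set.mem_compl_iff]
      constructor
      · rintro ⟨i, -, hcT⟩; exact hcT
      · intro hcT
        obtain ⟨i, hi⟩ := hmem c hcT
        exact ⟨i, hi, hcT⟩
    have hfin : ∀ i, ((S i \ T).toFinset : Finset C) = (S i \ T).toFinset := fun _ => rfl
    have hbU : (Finset.univ.biUnion fun i => (S i \ T).toFinset) = Tᶜ.toFinset := by
      ext c
      simp only [Finset.mem_biUnion, Finset.mem_univ, true_and, Set.mem_toFinset]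
      rw [← hcover]
      simp [Set.mem_iUnion]
    calc ∑ i, (S i \ T).ncard = ∑ i, ((S i \ T).toFinset).card := by
            simp_rw [Set.ncard_eq_toFinset_card']
      _ = (Finset.univ.biUnion fun i => (S i \ T).toFinset).card := by
            rw [Finset.card_biUnion]
            intro i _ j _ hij
            rw [Function.onFun, Finset.disjoint_left]
            intro c hc hc'
            rw [Set.mem_toFinset] at hc hc'
            exact (Set.disjoint_left.mp (hdisj i j hij)) hc hc'
      _ = Tᶜ.toFinset.card := by rw [hbU]
      _ = Tᶜ.ncard := (Set.ncard_eq_toFinset_card' _).symm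
  have := Finset.sum_congr rfl (fun i (_ : i ∈ Finset.univ) => (hsplit i).symm)
  rw [this, Finset.sum_add_distrib, hsum]
  omega


end AuxCRN

/-- 3C-criterion: a decomposition with `d` common complexes and
`hᵢ = |𝒞ᵢ ∩ 𝒞_𝒟|` is incidence independent iff `Σᵢ ℓᵢ − ℓ = Σᵢ hᵢ − d`. -/
theorem stmt5 {C R : Type} [Fintype C] [Fintype R] [DecidableEq C]
    (src tgt : R → C)
    (hloop : ∀ r, src r ≠ tgt r)
    (hiso : ∀ c : C, ∃ r, src r = c ∨ tgt r = c)
    {k : ℕ} (part : R → Fin k) :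
    IncIndep src tgt part ↔
      (∑ i : Fin k, (numLCsub src tgt part i : ℤ)) -
          Nat.card (parentGraph src tgt).ConnectedComponent =
        (∑ i : Fin k, (Nat.card ↥(cplxSet src tgt part i ∩ commonSet src tgt part) : ℤ)) -
          Nat.card ↥(commonSet src tgt part) := by
  classical
  have hA := range_incid_eq_iSup src tgt part
  have hiff : IncIndep src tgt part ↔
      (∑ i, Module.finrank ℝ (LinearMap.range (incidSub src tgt part i))
        = Module.finrank ℝ (LinearMap.range (incid src tgt))) := by
    have hfr : Module.finrank ℝ ↥(⨆ i, LinearMap.range (incidSub src tgt part i))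
        = Module.finrank ℝ (LinearMap.range (incid src tgt)) := by rw [← hA]
    constructor
    · rintro ⟨-, h2⟩
      rw [← hfr]
      exact (indep_iff_finrank _).mp h2
    · intro h
      exact ⟨hA, (indep_iff_finrank _).mpr (by rw [hfr]; exact h)⟩
  rw [hiff]
  have e1 := rank_incid src tgt
  have e5 := counting src tgt part hiso
  have E2 : (∑ i, Module.finrank ℝ (LinearMap.range (incidSub src tgt part i)))
      + (∑ i, Nat.card (subGraph src tgt part i).ConnectedComponent)
        = k * Fintype.card C := by
    rw [← Finset.sum_add_distrib,
      Finset.sum_congr rfl fun i (_ : i ∈ Finset.univ) => rank_incidSub src tgt part i]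
    simp [Finset.card_univ, mul_comm]
  have E3 : (∑ i, Nat.card (subGraph src tgt part i).ConnectedComponent)
      + (∑ i, Nat.card ↥(cplxSet src tgt part i))
        = (∑ i, numLCsub src tgt part i) + k * Fintype.card C := by
    rw [← Finset.sum_add_distrib,
      Finset.sum_congr rfl fun i (_ : i ∈ Finset.univ) => comps_sub src tgt part i,
      Finset.sum_add_distrib]
    simp [Finset.card_univ, mul_comm]
  rw [show (∑ i : Fin k, (numLCsub src tgt part i : ℤ))
      = ((∑ i, numLCsub src tgt part i : ℕ) : ℤ) from (Nat.cast_sum _ _).symm]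
  rw [show (∑ i : Fin k, (Nat.card ↥(cplxSet src tgt part i ∩ commonSet src tgt part) : ℤ))
      = ((∑ i, Nat.card ↥(cplxSet src tgt part i ∩ commonSet src tgt part) : ℕ) : ℤ)
      from (Nat.cast_sum _ _).symm]
  omega
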